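/- Let V be a reflexive Banach space and M : V → V* pseudo-monotone in the sense of Brézis and bounded on bounded sets. Then M is pseudo-monotone in the sense of Browder: if v_n ⇀ v weakly in V and limsup_n ⟨M(v_n), v_n - v⟩ ≤ 0, then M(v_n) ⇀ M(v) weakly in V* and lim_n ⟨M(v_n), v_n⟩ = ⟨M(v), v⟩. -/

import Mathlib

open Filter Topology

lemma stmt6_bdd {a : ℕ → ℝ} {B : ℝ} (h : ∀ n, |a n| ≤ B) :
    IsBoundedUnder (· ≤ ·) atTop a ∧ IsBoundedUnder (· ≥ ·) atTop a :=
  ⟨isBoundedUnder_of ⟨B, fun n => (abs_le.mp (h n)).2⟩,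
   isBoundedUnder_of ⟨-B, fun n => (abs_le.mp (h n)).1⟩⟩

/-- On a reflexive Banach space, an operator `M : V → V*` that is pseudo-monotone in the
sense of Brézis and bounded on bounded sets is pseudo-monotone in the sense of Browder:
if `v_n ⇀ v` weakly and `limsup ⟨M(v_n), v_n - v⟩ ≤ 0`, then `M(v_n) ⇀ M(v)` weakly in `V*`
and `⟨M(v_n), v_n⟩ → ⟨M(v), v⟩`. -/
theorem stmt_6 {V : Type*} [NormedAddCommGroup V] [NormedSpace ℝ V] [CompleteSpace V]
    (hrefl : Function.Surjective (NormedSpace.inclusionInDoubleDual ℝ V))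
    (M : V → StrongDual ℝ V)
    (hpm : ∀ (v : ℕ → V) (v₀ : V),
      (∀ f : StrongDual ℝ V, Tendsto (fun n => f (v n)) atTop (𝓝 (f v₀))) →
      limsup (fun n => M (v n) (v n - v₀)) atTop ≤ 0 →
      ∀ w : V, M v₀ (v₀ - w) ≤ liminf (fun n => M (v n) (v n - w)) atTop)
    (hbdd : ∀ R : ℝ, ∃ C : ℝ, ∀ v : V, ‖v‖ ≤ R → ‖M v‖ ≤ C) :
    ∀ (v : ℕ → V) (v₀ : V),
      (∀ f : StrongDual ℝ V, Tendsto (fun n => f (v n)) atTop (𝓝 (f v₀))) →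
      limsup (fun n => M (v n) (v n - v₀)) atTop ≤ 0 →
      (∀ w : V, Tendsto (fun n => M (v n) w) atTop (𝓝 (M v₀ w))) ∧
        Tendsto (fun n => M (v n) (v n)) atTop (𝓝 (M v₀ v₀)) := by
  intro v v₀ hw hls
  -- Step 1: the weakly convergent sequence is norm-bounded (Banach–Steinhaus on V*).
  obtain ⟨R, hR⟩ : ∃ R : ℝ, ∀ n, ‖v n‖ ≤ R := by
    obtain ⟨C', hC'⟩ := banach_steinhaus
      (g := fun n => NormedSpace.inclusionInDoubleDual ℝ V (v n)) (fun f => by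
        obtain ⟨C, hC⟩ := ((hw f).norm.bddAbove_range)
        exact ⟨C, fun n => by
          simpa [NormedSpace.dual_def] using hC (Set.mem_range_self (f := fun n => ‖f (v n)‖) n)⟩)
    refine ⟨C', fun n => ?_⟩
    have : ‖NormedSpace.inclusionInDoubleDual ℝ V (v n)‖ = ‖v n‖ :=
      (NormedSpace.inclusionInDoubleDualLi ℝ (E := V)).norm_map (v n)
    rw [← this]; exact hC' n
  -- Step 2: bound on the operator values.
  obtain ⟨C, hC⟩ := hbdd R
  have hMC : ∀ n, ‖M (v n)‖ ≤ C := fun n => hC _ (hR n)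
  have hC0 : 0 ≤ C := le_trans (norm_nonneg _) (hMC 0)
  have keyu : ∀ (u : V) (n : ℕ), |M (v n) u| ≤ C * ‖u‖ := fun u n => by
    calc |M (v n) u| = ‖M (v n) u‖ := rfl
      _ ≤ ‖M (v n)‖ * ‖u‖ := (M (v n)).le_opNorm u
      _ ≤ C * ‖u‖ := mul_le_mul_of_nonneg_right (hMC n) (norm_nonneg u)
  have keyw : ∀ (w : V) (n : ℕ), |M (v n) (v n - w)| ≤ C * (R + ‖w‖) := fun w n => by
    calc |M (v n) (v n - w)| ≤ C * ‖v n - w‖ := keyu _ n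
      _ ≤ C * (R + ‖w‖) := by
          refine mul_le_mul_of_nonneg_left ?_ hC0
          calc ‖v n - w‖ ≤ ‖v n‖ + ‖w‖ := norm_sub_le _ _
            _ ≤ R + ‖w‖ := add_le_add_left (hR n) _
  -- Step 3: ⟨M(v_n), v_n - v₀⟩ → 0.
  have h0 : Tendsto (fun n => M (v n) (v n - v₀)) atTop (𝓝 0) := by
    refine tendsto_of_le_liminf_of_limsup_le ?_ hls (stmt6_bdd (keyw v₀)).1
      (stmt6_bdd (keyw v₀)).2
    have := hpm v v₀ hw hls v₀
    simpa using this
  have hlim0sup : limsup (fun n => M (v n) (v n - v₀)) atTop = 0 := h0.limsup_eq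
  -- Step 4: ⟨M v₀, u⟩ ≤ liminf ⟨M(v_n), u⟩ for all u.
  have hge : ∀ u : V, M v₀ u ≤ liminf (fun n => M (v n) u) atTop := by
    intro u
    have h1 := hpm v v₀ hw hls (v₀ - u)
    have e1 : M v₀ (v₀ - (v₀ - u)) = M v₀ u := by rw [sub_sub_cancel]
    have e2 : (fun n => M (v n) (v n - (v₀ - u))) =
        (fun n => M (v n) (v n - v₀)) + (fun n => M (v n) u) := by
      funext n
      simp only [Pi.add_apply, map_sub]
      ring
    rw [e1, e2] at h1
    refine h1.trans ?_
    calc liminf ((fun n => M (v n) (v n - v₀)) + (fun n => M (v n) u)) atTop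
        ≤ limsup (fun n => M (v n) (v n - v₀)) atTop +
          liminf (fun n => M (v n) u) atTop :=
          liminf_add_le (stmt6_bdd (keyw v₀)).2 (stmt6_bdd (keyw v₀)).1
            (stmt6_bdd (keyu u)).2 (stmt6_bdd (keyu u)).1.isCoboundedUnder_ge
      _ = liminf (fun n => M (v n) u) atTop := by rw [hlim0sup, zero_add]
  -- Step 5: limsup ⟨M(v_n), u⟩ ≤ ⟨M v₀, u⟩ for all u.
  have hle : ∀ u : V, limsup (fun n => M (v n) u) atTop ≤ M v₀ u := by
    intro u
    have h1 := hge (-u)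
    have e0 : ((fun n => M (v n) u) + fun n => M (v n) (-u)) = fun _ : ℕ => (0 : ℝ) := by
      funext n; simp [Pi.add_apply]
    have h2 : limsup (fun n => M (v n) u) atTop + liminf (fun n => M (v n) (-u)) atTop
        ≤ (0 : ℝ) := by
      have := le_limsup_add (f := atTop) (u := fun n => M (v n) u)
        (v := fun n => M (v n) (-u)) (stmt6_bdd (keyu u)).1
        (stmt6_bdd (keyu u)).2.isCoboundedUnder_le (stmt6_bdd (keyu (-u))).1
        (stmt6_bdd (keyu (-u))).2
      rwa [e0, limsup_const] at this
    have h3 : M v₀ (-u) ≤ liminf (fun n => M (v n) (-u)) atTop := h1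
    have h4 : M v₀ (-u) = -(M v₀ u) := by simp
    linarith
  have part1 : ∀ u : V, Tendsto (fun n => M (v n) u) atTop (𝓝 (M v₀ u)) := fun u =>
    tendsto_of_le_liminf_of_limsup_le (hge u) (hle u) (stmt6_bdd (keyu u)).1
      (stmt6_bdd (keyu u)).2
  refine ⟨part1, ?_⟩
  have e : (fun n => M (v n) (v n)) =
      fun n => M (v n) (v n - v₀) + M (v n) v₀ := by
    funext n; rw [map_sub]; ring
  rw [e]
  simpa using h0.add (part1 v₀)
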